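/- Suppose min(k₁,k₂) = 1 and k := max(k₁,k₂) ≥ 2, and set r_k := (e²·(k−1)!)^{−1}. Then for every ε ∈ (0, r_k) there exists N such that for all n ≥ N, E[S_{n,sup}] ≥ (r_k − ε)^n. -/

import Mathlib

open MeasureTheory Set

noncomputable section

/-- Strict vector order: every coordinate strictly smaller. -/
def vlt {k : ℕ} (u v : Fin k → ℝ) : Prop := ∀ t, u t < v t

/-- Sample space: the `2n²` preference vectors `X_i^{(j)} = ω.1 i j ∈ [0,1]^{k₁}` and
`Y_j^{(i)} = ω.2 j i ∈ [0,1]^{k₂}`. -/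
abbrev PrefSpace (n k₁ k₂ : ℕ) :=
  (Fin n → Fin n → Fin k₁ → ℝ) × (Fin n → Fin n → Fin k₂ → ℝ)

/-- Uniform probability measure on the cube `[0,1]^k`. -/
def cubeMeasure (k : ℕ) : Measure (Fin k → ℝ) :=
  Measure.pi fun _ => volume.restrict (Icc (0:ℝ) 1)

/-- The distribution of the whole family: all `2n²` vectors independent,
uniform on their respective cubes. -/
def prefMeasure (n k₁ k₂ : ℕ) : Measure (PrefSpace n k₁ k₂) :=
  (Measure.pi fun _ : Fin n => Measure.pi fun _ : Fin n => cubeMeasure k₁).prod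
    (Measure.pi fun _ : Fin n => Measure.pi fun _ : Fin n => cubeMeasure k₂)

/-- The pair `(i,j)` w-blocks `σ`. -/
def wBlocks {n k₁ k₂ : ℕ} (ω : PrefSpace n k₁ k₂) (σ : Equiv.Perm (Fin n))
    (i j : Fin n) : Prop :=
  vlt (ω.1 i j) (ω.1 i (σ i)) ∧ vlt (ω.2 j i) (ω.2 j (σ⁻¹ j))

/-- The pair `(i,j)` s-blocks `σ`. -/
def sBlocks {n k₁ k₂ : ℕ} (ω : PrefSpace n k₁ k₂) (σ : Equiv.Perm (Fin n))
    (i j : Fin n) : Prop :=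
  (vlt (ω.1 i j) (ω.1 i (σ i)) ∧ ¬ vlt (ω.2 j (σ⁻¹ j)) (ω.2 j i)) ∨
  (¬ vlt (ω.1 i (σ i)) (ω.1 i j) ∧ vlt (ω.2 j i) (ω.2 j (σ⁻¹ j)))

/-- The pair `(i,j)` sup-blocks `σ`. -/
def supBlocks {n k₁ k₂ : ℕ} (ω : PrefSpace n k₁ k₂) (σ : Equiv.Perm (Fin n))
    (i j : Fin n) : Prop :=
  ¬ vlt (ω.1 i (σ i)) (ω.1 i j) ∧ ¬ vlt (ω.2 j (σ⁻¹ j)) (ω.2 j i)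

/-- `σ` is weakly stable. -/
def weaklyStable {n k₁ k₂ : ℕ} (ω : PrefSpace n k₁ k₂) (σ : Equiv.Perm (Fin n)) : Prop :=
  ∀ i j, j ≠ σ i → ¬ wBlocks ω σ i j

/-- `σ` is strongly stable. -/
def stronglyStable {n k₁ k₂ : ℕ} (ω : PrefSpace n k₁ k₂) (σ : Equiv.Perm (Fin n)) : Prop :=
  ∀ i j, j ≠ σ i → ¬ sBlocks ω σ i j

/-- `σ` is super-stable. -/
def superStable {n k₁ k₂ : ℕ} (ω : PrefSpace n k₁ k₂) (σ : Equiv.Perm (Fin n)) : Prop :=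
  ∀ i j, j ≠ σ i → ¬ supBlocks ω σ i j

/-- Number of weakly stable permutations. -/
def Sw (n k₁ k₂ : ℕ) (ω : PrefSpace n k₁ k₂) : ℕ :=
  Nat.card {σ : Equiv.Perm (Fin n) // weaklyStable ω σ}

/-- Number of strongly stable permutations. -/
def Ss (n k₁ k₂ : ℕ) (ω : PrefSpace n k₁ k₂) : ℕ :=
  Nat.card {σ : Equiv.Perm (Fin n) // stronglyStable ω σ}

/-- Number of super-stable permutations. -/
def Ssup (n k₁ k₂ : ℕ) (ω : PrefSpace n k₁ k₂) : ℕ :=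
  Nat.card {σ : Equiv.Perm (Fin n) // superStable ω σ}

/-- Expected number of weakly stable permutations. -/
def ESw (n k₁ k₂ : ℕ) : ℝ := ∫ ω, (Sw n k₁ k₂ ω : ℝ) ∂ prefMeasure n k₁ k₂

/-- Expected number of strongly stable permutations. -/
def ESs (n k₁ k₂ : ℕ) : ℝ := ∫ ω, (Ss n k₁ k₂ ω : ℝ) ∂ prefMeasure n k₁ k₂

/-- Expected number of super-stable permutations. -/
def ESsup (n k₁ k₂ : ℕ) : ℝ := ∫ ω, (Ssup n k₁ k₂ ω : ℝ) ∂ prefMeasure n k₁ k₂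

instance : IsProbabilityMeasure (volume.restrict (Icc (0:ℝ) 1)) :=
  ⟨by rw [Measure.restrict_apply_univ, Real.volume_Icc]; norm_num⟩

instance (k : ℕ) : IsProbabilityMeasure (cubeMeasure k) := by
  unfold cubeMeasure; infer_instance

def rowSet (n : ℕ) (r : Fin n) : Set (Fin n → Fin 1 → ℝ) :=
  Set.pi univ fun i => Set.pi univ fun _ : Fin 1 =>
    if i = r then Ioo (0:ℝ) (1/n) else Ioo (1/n) 1

def goodSet (n : ℕ) (f : Fin n → Fin n) : Set (Fin n → Fin n → Fin 1 → ℝ) :=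
  Set.pi univ fun a => rowSet n (f a)

lemma measurableSet_rowSet (n : ℕ) (r : Fin n) : MeasurableSet (rowSet n r) :=
  MeasurableSet.univ_pi fun _ => MeasurableSet.univ_pi fun _ => by
    split <;> exact measurableSet_Ioo

lemma measurableSet_goodSet (n : ℕ) (f : Fin n → Fin n) : MeasurableSet (goodSet n f) :=
  MeasurableSet.univ_pi fun _ => measurableSet_rowSet n _

lemma cube1_Ioo (a b : ℝ) (h0 : 0 ≤ a) (h1 : b ≤ 1) :
    cubeMeasure 1 (Set.pi univ fun _ : Fin 1 => Ioo a b) = ENNReal.ofReal (b - a) := by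
  rw [cubeMeasure, Measure.pi_pi]
  simp only [Finset.prod_const, Finset.card_univ, Fintype.card_fin, pow_one]
  rw [Measure.restrict_apply measurableSet_Ioo]
  rw [Set.inter_eq_left.mpr (Set.Ioo_subset_Icc_self.trans (Set.Icc_subset_Icc h0 h1))]
  exact Real.volume_Ioo

lemma measure_rowSet {n : ℕ} (hn : 1 ≤ n) (r : Fin n) :
    (Measure.pi fun _ : Fin n => cubeMeasure 1) (rowSet n r) =
      ENNReal.ofReal (1/n) * ENNReal.ofReal (1 - 1/n) ^ (n - 1) := by
  have h1n : (1:ℝ)/n ≤ 1 := by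
    rw [div_le_one (by exact_mod_cast hn)]
    exact_mod_cast hn
  rw [rowSet, Measure.pi_pi]
  have hval : ∀ i : Fin n,
      cubeMeasure 1 (Set.pi univ fun _ : Fin 1 =>
        if i = r then Ioo (0:ℝ) (1/n) else Ioo (1/n) 1) =
      if i = r then ENNReal.ofReal (1/n) else ENNReal.ofReal (1 - 1/n) := by
    intro i
    by_cases h : i = r
    · simp only [h, if_true]
      rw [cube1_Ioo 0 (1/n) le_rfl h1n]; norm_num
    · simp only [if_neg h]
      rw [cube1_Ioo (1/n) 1 (by positivity) le_rfl]
  rw [Finset.prod_congr rfl fun i _ => hval i]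
  rw [← Finset.mul_prod_erase Finset.univ _ (Finset.mem_univ r), if_pos rfl]
  congr 1
  rw [Finset.prod_congr rfl (fun i hi => if_neg (Finset.ne_of_mem_erase hi)),
    Finset.prod_const, Finset.card_erase_of_mem (Finset.mem_univ r),
    Finset.card_univ, Fintype.card_fin]


lemma measure_goodSet {n : ℕ} (hn : 1 ≤ n) (f : Fin n → Fin n) :
    (Measure.pi fun _ : Fin n => Measure.pi fun _ : Fin n => cubeMeasure 1) (goodSet n f) =
      (ENNReal.ofReal (1/n) * ENNReal.ofReal (1 - 1/n) ^ (n - 1)) ^ n := by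
  rw [goodSet, Measure.pi_pi]
  rw [Finset.prod_congr rfl fun a _ => measure_rowSet hn (f a)]
  rw [Finset.prod_const, Finset.card_univ, Fintype.card_fin]

lemma pow_le_exp_mul_factorial : ∀ n : ℕ, (n:ℝ)^n ≤ Real.exp n * n.factorial := by
  intro n
  induction n with
  | zero => simp
  | succ n ih =>
    have hstep : ((n:ℝ)+1)^n ≤ Real.exp 1 * (n:ℝ)^n := by
      rcases Nat.eq_zero_or_pos n with h | h
      · subst h; simpa using Real.one_le_exp (by norm_num : (0:ℝ) ≤ 1)
      · have hn0 : (0:ℝ) < n := by exact_mod_cast h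
        have h1 : (n:ℝ) + 1 ≤ (n:ℝ) * Real.exp (1/n) := by
          have := Real.add_one_le_exp (1/(n:ℝ))
          calc (n:ℝ) + 1 = (n:ℝ) * (1/(n:ℝ) + 1) := by field_simp; ring
            _ ≤ (n:ℝ) * Real.exp (1/n) := by
                exact mul_le_mul_of_nonneg_left this hn0.le
        calc ((n:ℝ)+1)^n ≤ ((n:ℝ) * Real.exp (1/n))^n :=
              pow_le_pow_left₀ (by positivity) h1 n
          _ = (n:ℝ)^n * Real.exp (1/n)^n := mul_pow _ _ _
          _ = (n:ℝ)^n * Real.exp (n * (1/n)) := by rw [Real.exp_nat_mul]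
          _ = Real.exp 1 * (n:ℝ)^n := by
              rw [mul_one_div, div_self hn0.ne', mul_comm]
    have hfact : ((n+1).factorial : ℝ) = ((n:ℝ)+1) * n.factorial := by
      rw [Nat.factorial_succ]; push_cast; ring
    have hexp : Real.exp (n+1) = Real.exp 1 * Real.exp n := by
      rw [← Real.exp_add]; ring_nf
    push_cast
    calc ((n:ℝ)+1)^(n+1) = ((n:ℝ)+1) * ((n:ℝ)+1)^n := by ring
      _ ≤ ((n:ℝ)+1) * (Real.exp 1 * (n:ℝ)^n) := by
          exact mul_le_mul_of_nonneg_left hstep (by positivity)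
      _ ≤ ((n:ℝ)+1) * (Real.exp 1 * (Real.exp n * n.factorial)) := by
          refine mul_le_mul_of_nonneg_left (mul_le_mul_of_nonneg_left ih ?_) (by positivity)
          positivity
      _ = Real.exp ((n:ℝ)+1) * (((n:ℝ)+1) * n.factorial) := by
          rw [show Real.exp ((n:ℝ)+1) = Real.exp 1 * Real.exp n by rw [← Real.exp_add]; ring_nf]
          ring
      _ = Real.exp ((n:ℝ)+1) * ((n+1).factorial) := by rw [hfact]

lemma inv_exp_le_pow {n : ℕ} (hn : 2 ≤ n) :
    (Real.exp 1)⁻¹ ≤ (1 - 1/(n:ℝ))^(n-1) := by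
  obtain ⟨m, rfl⟩ : ∃ m, n = m + 1 := ⟨n-1, by omega⟩
  have hm : 1 ≤ m := by omega
  have hm0 : (0:ℝ) < m := by exact_mod_cast hm
  have h1 : ((m:ℝ)+1)/m ≤ Real.exp (1/m) := by
    have := Real.add_one_le_exp (1/(m:ℝ))
    calc ((m:ℝ)+1)/m = 1/(m:ℝ) + 1 := by field_simp; ring
      _ ≤ _ := this
  have h2 : (((m:ℝ)+1)/m)^m ≤ Real.exp 1 := by
    calc (((m:ℝ)+1)/m)^m ≤ Real.exp (1/m)^m := pow_le_pow_left₀ (by positivity) h1 m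
      _ = Real.exp (m * (1/m)) := by rw [Real.exp_nat_mul]
      _ = Real.exp 1 := by rw [mul_one_div, div_self hm0.ne']
  have hb : 1 - 1/((m:ℕ)+1:ℝ) = (((m:ℝ)+1)/m)⁻¹ := by
    rw [inv_div]; field_simp; ring
  have hsub : ((m:ℕ)+1) - 1 = m := by omega
  rw [hsub]
  push_cast
  rw [hb, inv_pow]
  exact inv_anti₀ (by positivity) h2

lemma main_numeric {n : ℕ} (hn : 2 ≤ n) {c ε : ℝ} (hc : 1 ≤ c) (hε : 0 < ε)
    (hε' : ε < (Real.exp 1 ^ 2 * c)⁻¹) :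
    ((Real.exp 1 ^ 2 * c)⁻¹ - ε) ^ n ≤
      (n.factorial : ℝ) * ((1/n) * (1 - 1/n)^(n-1))^n := by
  have hn0 : (0:ℝ) < n := by exact_mod_cast (by omega : 0 < n)
  have he : (0:ℝ) < Real.exp 1 := Real.exp_pos 1
  have hA0 : 0 ≤ (Real.exp 1 ^ 2 * c)⁻¹ - ε := by linarith
  have hAle : (Real.exp 1 ^ 2 * c)⁻¹ - ε ≤ (Real.exp 1 ^ 2)⁻¹ := by
    have h1 : (Real.exp 1 ^ 2 * c)⁻¹ ≤ (Real.exp 1 ^ 2)⁻¹ := by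
      apply inv_anti₀ (by positivity)
      nlinarith
    linarith
  have step1 : ((Real.exp 1 ^ 2 * c)⁻¹ - ε) ^ n ≤ ((Real.exp 1 ^ 2)⁻¹) ^ n :=
    pow_le_pow_left₀ hA0 hAle n
  have step2 : ((Real.exp 1 ^ 2)⁻¹) ^ n =
      ((n:ℝ)^n / Real.exp 1 ^ n) * ((1/n) * (Real.exp 1)⁻¹)^n := by
    have hx : Real.exp 1 ≠ 0 := he.ne'
    rw [← div_pow, ← mul_pow]
    congr 1
    field_simp
  have step3 : ((n:ℝ)^n / Real.exp 1 ^ n) * ((1/n) * (Real.exp 1)⁻¹)^n ≤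
      (n.factorial : ℝ) * ((1/n) * (1 - 1/n)^(n-1))^n := by
    have h1 : (n:ℝ)^n / Real.exp 1 ^ n ≤ n.factorial := by
      rw [div_le_iff₀ (by positivity)]
      calc (n:ℝ)^n ≤ Real.exp n * n.factorial := pow_le_exp_mul_factorial n
        _ = (n.factorial:ℝ) * Real.exp 1 ^ n := by rw [Real.exp_one_pow]; ring
    have h2 : ((1/(n:ℝ)) * (Real.exp 1)⁻¹)^n ≤ ((1/n) * (1 - 1/n)^(n-1))^n := by
      apply pow_le_pow_left₀ (by positivity)
      exact mul_le_mul_of_nonneg_left (inv_exp_le_pow hn) (by positivity)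
    exact mul_le_mul h1 h2 (by positivity) (by positivity)
  calc ((Real.exp 1 ^ 2 * c)⁻¹ - ε) ^ n ≤ ((Real.exp 1 ^ 2)⁻¹) ^ n := step1
    _ = _ := step2
    _ ≤ _ := step3


instance (n k₁ k₂ : ℕ) : IsProbabilityMeasure (prefMeasure n k₁ k₂) := by
  unfold prefMeasure
  exact ⟨by rw [← Set.univ_prod_univ, Measure.prod_prod]; simp⟩

lemma mem_goodSet_iff {n : ℕ} {f : Fin n → Fin n} {y : Fin n → Fin n → Fin 1 → ℝ} :
    y ∈ goodSet n f ↔ ∀ a b (t : Fin 1),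
      y a b t ∈ (if b = f a then Ioo (0:ℝ) (1/n) else Ioo (1/n) 1) := by
  simp [goodSet, rowSet, Set.mem_pi]

lemma measurableSet_vlt {n k₁ k₂ k : ℕ} {g h : PrefSpace n k₁ k₂ → (Fin k → ℝ)}
    (hg : Measurable g) (hh : Measurable h) :
    MeasurableSet {ω : PrefSpace n k₁ k₂ | vlt (g ω) (h ω)} := by
  have : {ω : PrefSpace n k₁ k₂ | vlt (g ω) (h ω)} =
      ⋂ t, {ω | g ω t < h ω t} := by ext ω; simp [vlt]
  rw [this]
  exact MeasurableSet.iInter fun t => measurableSet_lt (hg.eval) (hh.eval)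

lemma measurableSet_superStable {n k₁ k₂ : ℕ} (σ : Equiv.Perm (Fin n)) :
    MeasurableSet {ω : PrefSpace n k₁ k₂ | superStable ω σ} := by
  have : {ω : PrefSpace n k₁ k₂ | superStable ω σ} =
      ⋂ i, ⋂ j, ⋂ (_ : j ≠ σ i), ({ω : PrefSpace n k₁ k₂ | supBlocks ω σ i j})ᶜ := by
    ext ω; simp [superStable]
  rw [this]
  refine MeasurableSet.iInter fun i => MeasurableSet.iInter fun j =>
    MeasurableSet.iInter fun _ => MeasurableSet.compl ?_
  have : {ω : PrefSpace n k₁ k₂ | supBlocks ω σ i j} =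
      ({ω : PrefSpace n k₁ k₂ | vlt (ω.1 i (σ i)) (ω.1 i j)})ᶜ ∩
      ({ω : PrefSpace n k₁ k₂ | vlt (ω.2 j (σ⁻¹ j)) (ω.2 j i)})ᶜ := by
    ext ω; simp [supBlocks]
  rw [this]
  exact ((measurableSet_vlt (by fun_prop) (by fun_prop)).compl).inter
    ((measurableSet_vlt (by fun_prop) (by fun_prop)).compl)

lemma ESsup_eq_sum (n k₁ k₂ : ℕ) :
    ESsup n k₁ k₂ =
      ∑ σ : Equiv.Perm (Fin n),
        ((prefMeasure n k₁ k₂) {ω | superStable ω σ}).toReal := by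
  classical
  have hS : ∀ ω : PrefSpace n k₁ k₂, (Ssup n k₁ k₂ ω : ℝ) =
      ∑ σ : Equiv.Perm (Fin n),
        Set.indicator {ω' : PrefSpace n k₁ k₂ | superStable ω' σ} (fun _ => (1:ℝ)) ω := by
    intro ω
    rw [Ssup, Nat.card_eq_fintype_card, Fintype.card_subtype]
    rw [Finset.card_filter]
    push_cast
    refine Finset.sum_congr rfl fun σ _ => ?_
    by_cases h : superStable ω σ
    · simp [Set.indicator_apply, h]
    · simp [Set.indicator_apply, h]
  rw [ESsup]
  rw [integral_congr_ae (Filter.Eventually.of_forall hS)]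
  rw [integral_finset_sum _ fun σ _ =>
    (integrable_const (1:ℝ)).indicator (measurableSet_superStable σ)]
  refine Finset.sum_congr rfl fun σ _ => ?_
  rw [integral_indicator_const (1:ℝ) (measurableSet_superStable σ)]
  simp; rfl

lemma snd_subset (n k₁ : ℕ) (σ : Equiv.Perm (Fin n)) :
    {ω : PrefSpace n k₁ 1 | ω.2 ∈ goodSet n (fun j => σ⁻¹ j)} ⊆
      {ω : PrefSpace n k₁ 1 | superStable ω σ} := by
  intro ω hω i j hne hblock
  apply hblock.2
  intro t
  have h1 := (mem_goodSet_iff.mp hω) j (σ⁻¹ j) t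
  have h2 := (mem_goodSet_iff.mp hω) j i t
  rw [if_pos rfl] at h1
  rw [if_neg (fun h : i = σ⁻¹ j => hne (by rw [h]; exact (Equiv.apply_symm_apply σ j).symm))] at h2
  exact h1.2.trans h2.1

lemma fst_subset (n k₂ : ℕ) (σ : Equiv.Perm (Fin n)) :
    {ω : PrefSpace n 1 k₂ | ω.1 ∈ goodSet n (fun i => σ i)} ⊆
      {ω : PrefSpace n 1 k₂ | superStable ω σ} := by
  intro ω hω i j hne hblock
  apply hblock.1
  intro t
  have h1 := (mem_goodSet_iff.mp hω) i (σ i) t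
  have h2 := (mem_goodSet_iff.mp hω) i j t
  rw [if_pos rfl] at h1
  rw [if_neg hne] at h2
  exact h1.2.trans h2.1

lemma pref_snd {n : ℕ} (hn : 1 ≤ n) (k₁ : ℕ) (f : Fin n → Fin n) :
    prefMeasure n k₁ 1 (Prod.snd ⁻¹' goodSet n f) =
      (ENNReal.ofReal (1/n) * ENNReal.ofReal (1 - 1/n) ^ (n - 1)) ^ n := by
  have hpre : Prod.snd ⁻¹' goodSet n f = (univ : Set (Fin n → Fin n → Fin k₁ → ℝ)) ×ˢ goodSet n f := by
    ext ⟨a, b⟩; simp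
  rw [prefMeasure, hpre, Measure.prod_prod, measure_univ, one_mul, measure_goodSet hn f]

lemma pref_fst {n : ℕ} (hn : 1 ≤ n) (k₂ : ℕ) (f : Fin n → Fin n) :
    prefMeasure n 1 k₂ (Prod.fst ⁻¹' goodSet n f) =
      (ENNReal.ofReal (1/n) * ENNReal.ofReal (1 - 1/n) ^ (n - 1)) ^ n := by
  have hpre : Prod.fst ⁻¹' goodSet n f = goodSet n f ×ˢ (univ : Set (Fin n → Fin n → Fin k₂ → ℝ)) := by
    ext ⟨a, b⟩; simp
  rw [prefMeasure, hpre, Measure.prod_prod, measure_univ, mul_one, measure_goodSet hn f]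

lemma toReal_val {n : ℕ} (hn : 1 ≤ n) :
    (((ENNReal.ofReal (1/n) * ENNReal.ofReal (1 - 1/n) ^ (n - 1)) ^ n)).toReal =
      ((1/(n:ℝ)) * (1 - 1/n) ^ (n - 1)) ^ n := by
  have h1 : (0:ℝ) ≤ 1/n := by positivity
  have h2 : (0:ℝ) ≤ 1 - 1/n := by
    have : (1:ℝ) ≤ n := by exact_mod_cast hn
    have : (1:ℝ)/n ≤ 1 := by rw [div_le_one (by linarith)]; linarith
    linarith
  rw [ENNReal.toReal_pow, ENNReal.toReal_mul, ENNReal.toReal_pow,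
    ENNReal.toReal_ofReal h1, ENNReal.toReal_ofReal h2]

lemma sum_lower {n k₁ k₂ : ℕ} (hn : 2 ≤ n)
    (E : Equiv.Perm (Fin n) → Set (PrefSpace n k₁ k₂))
    (hsub : ∀ σ, E σ ⊆ {ω | superStable ω σ})
    (hval : ∀ σ, (prefMeasure n k₁ k₂ (E σ)).toReal =
      ((1/(n:ℝ)) * (1 - 1/n) ^ (n - 1)) ^ n) :
    (n.factorial : ℝ) * ((1/(n:ℝ)) * (1 - 1/n) ^ (n - 1)) ^ n ≤ ESsup n k₁ k₂ := by
  rw [ESsup_eq_sum]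
  have hle : ∀ σ : Equiv.Perm (Fin n),
      ((1/(n:ℝ)) * (1 - 1/n) ^ (n - 1)) ^ n ≤
        ((prefMeasure n k₁ k₂) {ω | superStable ω σ}).toReal := by
    intro σ
    rw [← hval σ]
    exact ENNReal.toReal_mono (measure_ne_top _ _) (measure_mono (hsub σ))
  calc (n.factorial : ℝ) * ((1/(n:ℝ)) * (1 - 1/n) ^ (n - 1)) ^ n
      = ∑ _σ : Equiv.Perm (Fin n), ((1/(n:ℝ)) * (1 - 1/n) ^ (n - 1)) ^ n := by
        rw [Finset.sum_const, Finset.card_univ, Fintype.card_perm, Fintype.card_fin,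
          nsmul_eq_mul]
    _ ≤ _ := Finset.sum_le_sum fun σ _ => hle σ



/-- If `min(k₁,k₂) = 1` and `k := max(k₁,k₂) ≥ 2`, with
`r_k := (e²·(k−1)!)⁻¹`, then for every `ε ∈ (0, r_k)` and all large `n`,
`E[S_{n,sup}] ≥ (r_k − ε)^n`. -/
theorem super_stable_lower_bound_one_side_linear (k₁ k₂ : ℕ)
    (hmin : min k₁ k₂ = 1) (hmax : 2 ≤ max k₁ k₂) (ε : ℝ) (hε : 0 < ε)
    (hε' : ε < (Real.exp 1 ^ 2 * (Nat.factorial (max k₁ k₂ - 1) : ℝ))⁻¹) :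
    ∃ N : ℕ, ∀ n : ℕ, N ≤ n →
      ((Real.exp 1 ^ 2 * (Nat.factorial (max k₁ k₂ - 1) : ℝ))⁻¹ - ε) ^ n ≤
        ESsup n k₁ k₂ := by

  have hc : (1:ℝ) ≤ (Nat.factorial (max k₁ k₂ - 1) : ℝ) := by
    exact_mod_cast Nat.one_le_iff_ne_zero.mpr (Nat.factorial_ne_zero _)
  refine ⟨2, fun n hn => ?_⟩
  have hn1 : 1 ≤ n := by omega
  have hcase : k₁ = 1 ∨ k₂ = 1 := by omega
  have hnum := main_numeric hn hc hε hε'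
  rcases hcase with h | h
  · subst h
    refine le_trans hnum (sum_lower hn
      (fun σ => {ω : PrefSpace n 1 k₂ | ω.1 ∈ goodSet n (fun i => σ i)})
      (fun σ => fst_subset n k₂ σ) (fun σ => ?_))
    show ((prefMeasure n 1 k₂) (Prod.fst ⁻¹' goodSet n (fun i => σ i))).toReal = _
    rw [pref_fst hn1 k₂ _, toReal_val hn1]
  · subst h
    refine le_trans hnum (sum_lower hn
      (fun σ => {ω : PrefSpace n k₁ 1 | ω.2 ∈ goodSet n (fun j => σ⁻¹ j)})
      (fun σ => snd_subset n k₁ σ) (fun σ => ?_))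
    show ((prefMeasure n k₁ 1) (Prod.snd ⁻¹' goodSet n (fun j => σ⁻¹ j))).toReal = _
    rw [pref_snd hn1 k₁ _, toReal_val hn1]
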